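/- For every n ≥ 1 and every P ∈ D_n^{h,≥}, the number of occurrences of the factor DUD in P equals the number of F steps in φ(P), minus the number of factors of the form UF^kD (k ≥ 1) in φ(P), minus 1 if φ(P) = F^n (minus 0 otherwise). -/

import Mathlib

inductive Step : Type
  | U | D | F
  deriving DecidableEq, Repr

open Step

/-- Number of occurrences of `p` as a factor (consecutive steps) of `w`. -/
def countFactor (p w : List Step) : ℕ :=
  w.tails.countP fun t => p.isPrefixOf t

/-- `w` is a Dyck path (word over {U,D} with as many U's as D's,
every prefix having at least as many U's as D's). -/
def IsDyck (w : List Step) : Prop :=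
  w.count F = 0 ∧ w.count U = w.count D ∧
    ∀ p : List Step, p <+: w → p.count D ≤ p.count U

/-- `w` is a Motzkin path. -/
def IsMotzkin (w : List Step) : Prop :=
  w.count U = w.count D ∧ ∀ p : List Step, p <+: w → p.count D ≤ p.count U

/-- The (maximal) height of a path. -/
def height (w : List Step) : ℕ :=
  (w.inits.map fun p => p.count U - p.count D).foldr max 0

/-- The set `D^{h,≥}` of Dyck paths with first return decomposition
`P = U α D β` satisfying `h(UαD) ≥ h(β)`, recursively. -/
inductive DH : List Step → Prop
  | nil : DH []
  | cons (α β : List Step) : DH α → DH β →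
      height (U :: (α ++ [D])) ≥ height β → DH (U :: (α ++ [D] ++ β))

/-- The map φ from `D^{h,≥}` to Motzkin paths, as a relation:
φ(ε)=ε, φ(αUD)=φ(α)F, φ(αUUβDγD)=φ(α)φ(γ)Uφ(β)D. -/
inductive Phi : List Step → List Step → Prop
  | nil : Phi [] []
  | flat (α a : List Step) : DH α → Phi α a →
      Phi (α ++ [U, D]) (a ++ [F])
  | up (α β γ a b c : List Step) : DH α → DH β → DH γ →
      Phi α a → Phi β b → Phi γ c →
      Phi (α ++ [U, U] ++ β ++ [D] ++ γ ++ [D]) (a ++ c ++ U :: (b ++ [D]))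

/-- Auxiliary: the list starts with one or more `F`'s followed by a `D`. -/
def fThenD : List Step → Bool
  | F :: D :: _ => true
  | F :: rest => fThenD rest
  | _ => false

/-- Auxiliary: the list starts with one or more `F`'s followed by a `U`. -/
def fThenU : List Step → Bool
  | F :: U :: _ => true
  | F :: rest => fThenU rest
  | _ => false

/-- Number of occurrences of factors of the form `U F^k D` with `k ≥ 1` in `w`. -/
def countUFD (w : List Step) : ℕ :=
  w.tails.countP fun t => match t with
    | U :: rest => fThenD rest
    | _ => false

/-- Number of occurrences of factors of the form `U F^k U` with `k ≥ 1` in `w`. -/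
def countUFU (w : List Step) : ℕ :=
  w.tails.countP fun t => match t with
    | U :: rest => fThenU rest
    | _ => false

-- Stage 1 lemmas
@[simp] lemma fThenD_nil : fThenD [] = false := rfl
@[simp] lemma fThenD_U (w : List Step) : fThenD (U :: w) = false := rfl
@[simp] lemma fThenD_D (w : List Step) : fThenD (D :: w) = false := rfl
@[simp] lemma fThenD_FD (w : List Step) : fThenD (F :: D :: w) = true := rfl
@[simp] lemma fThenD_FF (w : List Step) : fThenD (F :: F :: w) = fThenD (F :: w) := rfl
@[simp] lemma fThenD_FU (w : List Step) : fThenD (F :: U :: w) = false := rfl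
@[simp] lemma fThenD_F1 : fThenD [F] = false := rfl

def qUFD : List Step → Bool
  | U :: rest => fThenD rest
  | _ => false

@[simp] lemma qUFD_nil : qUFD [] = false := rfl
@[simp] lemma qUFD_U (w : List Step) : qUFD (U :: w) = fThenD w := rfl
@[simp] lemma qUFD_D (w : List Step) : qUFD (D :: w) = false := rfl
@[simp] lemma qUFD_F (w : List Step) : qUFD (F :: w) = false := rfl

lemma countUFD_eq (w : List Step) : countUFD w = w.tails.countP qUFD := by
  unfold countUFD
  congr 1

lemma countFactor_cons (p : List Step) (x : Step) (w : List Step) :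
    countFactor p (x :: w) = countFactor p w + (if p.isPrefixOf (x :: w) then 1 else 0) := by
  simp [countFactor, List.tails_cons, List.countP_cons]

lemma countUFD_cons (x : Step) (w : List Step) :
    countUFD (x :: w) = countUFD w + (if qUFD (x :: w) then 1 else 0) := by
  simp [countUFD_eq, List.tails_cons, List.countP_cons]

@[simp] lemma countFactor_nil (p : List Step) (hp : p ≠ []) : countFactor p [] = 0 := by
  cases p with
  | nil => exact absurd rfl hp
  | cons a q => simp [countFactor, List.isPrefixOf]

@[simp] lemma countUFD_nil : countUFD [] = 0 := by simp [countUFD_eq, qUFD]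

lemma isPrefixOf_append_of_le (p t y : List Step) (h : p.length ≤ t.length) :
    p.isPrefixOf (t ++ y) = p.isPrefixOf t := by
  induction p generalizing t with
  | nil => simp [List.isPrefixOf]
  | cons a p ih =>
    cases t with
    | nil => simp at h
    | cons b t =>
      simp [List.isPrefixOf] at h ⊢
      rw [ih t (by omega)]

lemma countFactor_F_eq_count (w : List Step) : countFactor [F] w = w.count F := by
  induction w with
  | nil => simp
  | cons x w ih =>
    rw [countFactor_cons, ih, List.count_cons]
    congr 1
    cases x <;> simp [List.isPrefixOf]

-- Stage 2: DUD factor counting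
@[simp] lemma pre_DUD_D (y : List Step) :
    [D,U,D].isPrefixOf (D :: y) = [U,D].isPrefixOf y := by simp [List.isPrefixOf]
@[simp] lemma pre_DUD_U (y : List Step) : [D,U,D].isPrefixOf (U :: y) = false := by
  simp [List.isPrefixOf]
@[simp] lemma pre_DUD_F (y : List Step) : [D,U,D].isPrefixOf (F :: y) = false := by
  simp [List.isPrefixOf]

lemma dud_cons_U (w : List Step) :
    countFactor [D,U,D] (U :: w) = countFactor [D,U,D] w := by
  rw [countFactor_cons]; simp

lemma dud_cons_D (w : List Step) :
    countFactor [D,U,D] (D :: w) =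
      countFactor [D,U,D] w + (if [U,D].isPrefixOf w then 1 else 0) := by
  rw [countFactor_cons]; simp

lemma dud_append_endD (x y : List Step) (hx : x = [] ∨ x.getLast? = some D) :
    countFactor [D,U,D] (x ++ y) = countFactor [D,U,D] x + countFactor [D,U,D] y +
      (if x ≠ [] ∧ [U,D].isPrefixOf y then 1 else 0) := by
  induction x with
  | nil => simp
  | cons a x ih =>
    rcases hx with hx | hx
    · exact absurd hx (by simp)
    rcases x with _ | ⟨b, x1⟩
    · have ha : a = D := by simpa using hx
      subst ha
      rw [List.cons_append, countFactor_cons, countFactor_cons]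
      simp
    rcases x1 with _ | ⟨c, x2⟩
    · have hb : b = D := by simpa using hx
      subst hb
      have hih := ih (Or.inr (by simp))
      rw [List.cons_append, countFactor_cons, hih, countFactor_cons (w := [D])]
      cases a <;> simp [countFactor_cons, List.isPrefixOf] <;> omega
    · have hx' : (b :: c :: x2) = [] ∨ (b :: c :: x2).getLast? = some D := by
        right; rw [← hx]; rfl
      have hih := ih hx'
      rw [List.cons_append, countFactor_cons, hih, countFactor_cons (w := b :: c :: x2)]
      rw [show a :: (b :: c :: x2 ++ y) = (a :: b :: c :: x2) ++ y from rfl,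
         isPrefixOf_append_of_le _ _ _ (by simp)]
      simp only [ne_eq, List.cons_ne_nil, not_false_eq_true, true_and]
      omega

-- Stage 3: fThenD recursion and Motzkin facts
lemma fThenD_F_cons (w : List Step) :
    fThenD (F :: w) = ((w.head? == some D) || fThenD w) := by
  cases w with
  | nil => rfl
  | cons a w => cases a <;> simp

lemma fThenD_append_F (r : List Step) : fThenD (r ++ [F]) = fThenD r := by
  induction r with
  | nil => simp
  | cons a r ih =>
    cases a <;> simp_all [fThenD_F_cons]
    cases r with
    | nil => simp
    | cons b r => simp [List.head?_append_of_ne_nil]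

lemma fThenD_append_of_mem (r y : List Step) (h : ∃ x ∈ r, x ≠ F) :
    fThenD (r ++ y) = fThenD r := by
  induction r with
  | nil => simp at h
  | cons a r ih =>
    cases a
    · simp
    · simp
    · have hr : ∃ x ∈ r, x ≠ F := by
        rcases h with ⟨x, hx, hxF⟩
        rcases List.mem_cons.mp hx with hx | hx
        · subst hx; simp at hxF
        · exact ⟨x, hx, hxF⟩
      have hne : r ≠ [] := by rintro rfl; simp at hr
      rw [List.cons_append, fThenD_F_cons, fThenD_F_cons, ih hr,
        List.head?_append_of_ne_nil _ hne]

lemma fThenD_replicate (k : ℕ) : fThenD (List.replicate k F) = false := by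
  induction k with
  | zero => rfl
  | succ k ih =>
    rw [List.replicate_succ, fThenD_F_cons, ih]
    cases k <;> simp [List.replicate_succ]

lemma fThenD_replicate_U (k : ℕ) (z : List Step) :
    fThenD (List.replicate k F ++ U :: z) = false := by
  induction k with
  | zero => simp
  | succ k ih =>
    rw [List.replicate_succ, List.cons_append, fThenD_F_cons, ih]
    cases k <;> simp [List.replicate_succ]

lemma fThenD_replicate_D (k : ℕ) (z : List Step) :
    fThenD (List.replicate (k+1) F ++ D :: z) = true := by
  induction k with
  | zero => simp
  | succ k ih =>
    rw [List.replicate_succ, List.cons_append, fThenD_F_cons, ih]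
    simp

lemma fThenD_true_elim (w : List Step) (h : fThenD w = true) :
    ∃ k w', w = List.replicate (k+1) F ++ D :: w' := by
  induction w with
  | nil => simp at h
  | cons a w ih =>
    cases a
    · simp at h
    · simp at h
    · rw [fThenD_F_cons] at h
      rcases Bool.or_eq_true_iff.mp h with h1 | h1
      · cases w with
        | nil => simp at h1
        | cons b w =>
          have hb : b = D := by simpa using h1
          subst hb
          exact ⟨0, w, rfl⟩
      · obtain ⟨k, w', hw⟩ := ih h1
        exact ⟨k + 1, w', by rw [hw]; rfl⟩

lemma prefix_append_cases {p x y : List Step} (h : p <+: x ++ y) :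
    p <+: x ∨ ∃ q, q <+: y ∧ p = x ++ q := by
  rcases h with ⟨t, ht⟩
  rcases List.append_eq_append_iff.mp ht with ⟨a, ha1, _⟩ | ⟨c, hc1, hc2⟩
  · exact Or.inl ⟨a, ha1.symm⟩
  · exact Or.inr ⟨c, ⟨t, hc2.symm⟩, hc1⟩

lemma motzkin_nil : IsMotzkin [] := by constructor <;> simp [IsMotzkin]

lemma motzkin_append {x y : List Step} (hx : IsMotzkin x) (hy : IsMotzkin y) :
    IsMotzkin (x ++ y) := by
  obtain ⟨hx1, hx2⟩ := hx
  obtain ⟨hy1, hy2⟩ := hy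
  constructor
  · simp [List.count_append, hx1, hy1]
  · intro p hp
    rcases prefix_append_cases hp with hp | ⟨q, hq, rfl⟩
    · exact hx2 p hp
    · have := hy2 q hq
      simp [List.count_append]
      omega

lemma motzkin_F : IsMotzkin [F] := by
  constructor
  · simp
  · intro p hp
    rcases hp with ⟨t, ht⟩
    cases p with
    | nil => simp
    | cons a p =>
      simp at ht
      obtain ⟨rfl, rfl, rfl⟩ := ht
      simp

lemma motzkin_arch {w : List Step} (hw : IsMotzkin w) : IsMotzkin (U :: (w ++ [D])) := by
  obtain ⟨hw1, hw2⟩ := hw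
  constructor
  · simp [List.count_append, hw1]
  · intro p hp
    cases p with
    | nil => simp
    | cons a p =>
      obtain ⟨ha, hp2⟩ : a = U ∧ p <+: w ++ [D] := by
        rcases hp with ⟨t, ht⟩
        simp at ht
        exact ⟨ht.1, ⟨t, ht.2⟩⟩
      subst ha
      rcases List.prefix_concat_iff.mp hp2 with rfl | hp2
      · simp [List.count_append, hw1]
      · have := hw2 p hp2
        simp
        omega

lemma phi_motzkin {P m : List Step} (h : Phi P m) : IsMotzkin m := by
  induction h with
  | nil => exact motzkin_nil
  | flat α a _ _ ih => exact motzkin_append ih motzkin_F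
  | up α β γ a b c _ _ _ _ _ _ iha ihb ihc =>
    exact motzkin_append (motzkin_append iha ihc) (motzkin_arch ihb)

lemma motzkin_no_suffix_UF {b : List Step} (hb : IsMotzkin b) (k : ℕ) :
    ¬ (U :: List.replicate (k+1) F <:+ b) := by
  rintro ⟨t, ht⟩
  obtain ⟨hb1, hb2⟩ := hb
  have hpre : t <+: b := ⟨U :: List.replicate (k+1) F, ht⟩
  have := hb2 t hpre
  rw [← ht] at hb1
  simp [List.count_append, List.count_replicate] at hb1
  omega

lemma motzkin_fThenD {b : List Step} (hb : IsMotzkin b) : fThenD b = false := by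
  by_contra h
  obtain ⟨k, w', hw⟩ := fThenD_true_elim b (by simpa using h)
  have hpre : List.replicate (k+1) F ++ [D] <+: b := by
    rw [hw]
    exact ⟨w', by simp⟩
  have := hb.2 _ hpre
  simp [List.count_append, List.count_replicate] at this

lemma motzkin_head_cases {c : List Step} (hc : IsMotzkin c) :
    (∀ x ∈ c, x = F) ∨ ∃ i c', c = List.replicate i F ++ U :: c' := by
  induction c with
  | nil => exact Or.inl (by simp)
  | cons a c ih =>
    cases a
    · exact Or.inr ⟨0, c, rfl⟩
    · have := hc.2 [D] ⟨c, rfl⟩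
      simp at this
    · have hc' : IsMotzkin c := by
        constructor
        · have := hc.1; simpa using this
        · intro p hp
          have := hc.2 (F :: p) (by
            rcases hp with ⟨t, ht⟩
            exact ⟨t, by simp [ht]⟩)
          simpa using this
      rcases ih hc' with h | ⟨i, c', rfl⟩
      · exact Or.inl (by simpa using h)
      · exact Or.inr ⟨i + 1, c', by rw [List.replicate_succ]; rfl⟩

lemma countUFD_append_congr (x y : List Step)
    (h : ∀ r, (U :: r) <:+ x → fThenD (r ++ y) = fThenD r) :
    countUFD (x ++ y) = countUFD x + countUFD y := by
  induction x with
  | nil => simp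
  | cons a x ih =>
    have hx : ∀ r, (U :: r) <:+ x → fThenD (r ++ y) = fThenD r := by
      intro r hr
      exact h r (hr.trans ⟨[a], rfl⟩)
    rw [List.cons_append, countUFD_cons, ih hx, countUFD_cons]
    have : qUFD (a :: (x ++ y)) = qUFD (a :: x) := by
      cases a <;> simp
      exact h x ⟨[], rfl⟩
    rw [this]
    omega

-- Stage 4: altUD, height, DH structure
def altUD : ℕ → List Step
  | 0 => []
  | n+1 => U :: D :: altUD n

@[simp] lemma altUD_zero : altUD 0 = [] := rfl
@[simp] lemma altUD_succ (n : ℕ) : altUD (n+1) = U :: D :: altUD n := rfl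

@[simp] lemma altUD_length (n : ℕ) : (altUD n).length = 2 * n := by
  induction n with
  | zero => rfl
  | succ n ih => simp [ih]; omega

@[simp] lemma altUD_count_U (n : ℕ) : (altUD n).count U = n := by
  induction n with
  | zero => rfl
  | succ n ih => simp [List.count_cons, ih]

@[simp] lemma altUD_count_D (n : ℕ) : (altUD n).count D = n := by
  induction n with
  | zero => rfl
  | succ n ih => simp [List.count_cons, ih]

lemma altUD_succ_snoc (n : ℕ) : altUD (n+1) = altUD n ++ [U, D] := by
  induction n with
  | zero => rfl
  | succ n ih =>
    show U :: D :: altUD (n+1) = (U :: D :: altUD n) ++ [U, D]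
    rw [ih]; rfl

lemma altUD_no_UU (n : ℕ) : ∀ x y : List Step, altUD n ≠ x ++ U :: U :: y := by
  induction n with
  | zero =>
    intro x y h
    apply_fun List.length at h
    simp at h
  | succ n ih =>
    intro x y h
    rw [altUD_succ] at h
    rcases x with _ | ⟨a, x⟩
    · simp at h
    rcases x with _ | ⟨b, x⟩
    · simp at h
    · simp at h
      exact ih x y h.2.2

lemma le_foldr_max (a : ℕ) (l : List ℕ) (h : a ∈ l) : a ≤ l.foldr max 0 := by
  induction l with
  | nil => simp at h
  | cons b l ih =>
    rcases List.mem_cons.mp h with rfl | h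
    · exact le_max_left _ _
    · exact le_trans (ih h) (le_max_right _ _)

lemma foldr_max_le (l : List ℕ) (n : ℕ) (h : ∀ a ∈ l, a ≤ n) : l.foldr max 0 ≤ n := by
  induction l with
  | nil => simp
  | cons b l ih =>
    simp only [List.foldr_cons, max_le_iff]
    exact ⟨h b (by simp), ih fun a ha => h a (by simp [ha])⟩

lemma prefix_le_height {p w : List Step} (h : p <+: w) :
    p.count U - p.count D ≤ height w := by
  unfold height
  exact le_foldr_max _ _ (List.mem_map_of_mem ((List.mem_inits _ _).mpr h))

lemma height_le_iff {w : List Step} {n : ℕ} :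
    height w ≤ n ↔ ∀ p, p <+: w → p.count U - p.count D ≤ n := by
  constructor
  · intro h p hp
    exact le_trans (prefix_le_height hp) h
  · intro h
    unfold height
    apply foldr_max_le
    intro a ha
    rcases List.mem_map.mp ha with ⟨p, hp, rfl⟩
    exact h p ((List.mem_inits _ _).mp hp)

lemma height_UD : height [U, D] = 1 := by decide

lemma DH_head {P : List Step} (h : DH P) : P = [] ∨ ∃ t, P = U :: t := by
  cases h with
  | nil => exact Or.inl rfl
  | cons α β _ _ _ => exact Or.inr ⟨_, rfl⟩

lemma DH_lastD {P : List Step} (h : DH P) : P = [] ∨ ∃ Q, P = Q ++ [D] := by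
  induction h with
  | nil => exact Or.inl rfl
  | cons α β hα hβ hgt ihα ihβ =>
    rcases ihβ with rfl | ⟨Q, rfl⟩
    · exact Or.inr ⟨U :: α, by simp⟩
    · exact Or.inr ⟨U :: (α ++ [D] ++ Q), by simp⟩

lemma DH_getLast {P : List Step} (h : DH P) : P = [] ∨ P.getLast? = some D := by
  rcases DH_lastD h with rfl | ⟨Q, rfl⟩
  · exact Or.inl rfl
  · exact Or.inr List.getLast?_concat

lemma DH_height_le_one {β : List Step} (h : DH β) (hh : height β ≤ 1) :
    ∃ k, β = altUD k := by
  induction h with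
  | nil => exact ⟨0, rfl⟩
  | cons α β' hα hβ' hgt ihα ihβ' =>
    have hα0 : α = [] := by
      rcases DH_head hα with rfl | ⟨t, rfl⟩
      · rfl
      · exfalso
        have hpre : [U, U] <+: U :: ((U :: t) ++ [D] ++ β') := ⟨t ++ [D] ++ β', by simp⟩
        have := height_le_iff.mp hh _ hpre
        simp [List.count_cons] at this
    subst hα0
    have hβ'h : height β' ≤ 1 := by
      rw [height_le_iff]
      intro p hp
      have hpre : U :: D :: p <+: U :: ([] ++ [D] ++ β') := by
        rcases hp with ⟨t, ht⟩
        exact ⟨t, by simp [ht]⟩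
      have := height_le_iff.mp hh _ hpre
      simp [List.count_cons] at this
      omega
    obtain ⟨k, rfl⟩ := ihβ' hβ'h
    exact ⟨k + 1, by simp⟩

lemma DH_startUD {γ : List Step} (h : DH γ) (hpre : [U, D].isPrefixOf γ = true) :
    ∃ k, γ = altUD (k + 1) := by
  cases h with
  | nil => simp [List.isPrefixOf] at hpre
  | cons α β hα hβ hgt =>
    rcases DH_head hα with rfl | ⟨t, rfl⟩
    · have h1 : height β ≤ 1 := by
        refine le_trans hgt ?_
        simp [height_UD.symm]
      obtain ⟨k, rfl⟩ := DH_height_le_one hβ h1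
      exact ⟨k, by simp⟩
    · simp [List.isPrefixOf] at hpre

lemma phi_length {P m : List Step} (h : Phi P m) : P.length = 2 * m.length := by
  induction h with
  | nil => rfl
  | flat α a _ _ ih => simp [ih]; omega
  | up α β γ a b c _ _ _ _ _ _ iha ihb ihc => simp [iha, ihb, ihc]; omega

lemma phi_allF {P m : List Step} (h : Phi P m) (hf : ∀ x ∈ m, x = F) :
    P = altUD m.length := by
  induction h with
  | nil => rfl
  | flat α a hα hphi ih =>
    have hf' : ∀ x ∈ a, x = F := fun x hx => hf x (by simp [hx])
    rw [ih hf', ← altUD_succ_snoc]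
    simp
  | up α β γ a b c _ _ _ _ _ _ _ _ _ =>
    have := hf U (by simp)
    exact absurd this (by simp)

lemma phi_altUD {P m : List Step} (h : Phi P m) :
    ∀ n, P = altUD n → ∀ x ∈ m, x = F := by
  induction h with
  | nil => simp
  | flat α a hα hphi ih =>
    intro n hP x hx
    obtain ⟨n', rfl⟩ : ∃ n', n = n' + 1 := by
      cases n with
      | zero => apply_fun List.length at hP; simp at hP
      | succ n' => exact ⟨n', rfl⟩
    rw [altUD_succ_snoc] at hP
    have hα' : α = altUD n' := List.append_cancel_right hP
    rcases List.mem_append.mp hx with hx | hx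
    · exact ih n' hα' x hx
    · simpa using hx
  | up α β γ a b c _ _ _ _ _ _ _ _ _ =>
    intro n hP
    exfalso
    refine altUD_no_UU n α (β ++ [D] ++ γ ++ [D]) ?_
    rw [← hP]
    simp


-- Stage 5: main identity
lemma DH_inversion {P : List Step} (h : DH P) :
    P = [] ∨ ∃ α₁ β₁, DH α₁ ∧ DH β₁ ∧ height (U :: (α₁ ++ [D])) ≥ height β₁ ∧
      P = U :: (α₁ ++ [D] ++ β₁) := by
  cases h with
  | nil => exact Or.inl rfl
  | cons α β h1 h2 h3 => exact Or.inr ⟨α, β, h1, h2, h3, rfl⟩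

lemma UDpre_append_D {γ : List Step} (h : DH γ) :
    [U, D].isPrefixOf (γ ++ [D]) = [U, D].isPrefixOf γ := by
  rcases DH_head h with rfl | ⟨t, rfl⟩
  · simp [List.isPrefixOf]
  · cases t with
    | nil =>
      rcases DH_getLast h with h' | h' <;> simp at h'
    | cons s t' =>
      exact isPrefixOf_append_of_le _ _ _ (by simp)

lemma main_identity {P m : List Step} (hphi : Phi P m) : DH P →
    countFactor [D, U, D] P + countUFD m +
      (if m ≠ [] ∧ ∀ x ∈ m, x = F then 1 else 0) = countFactor [F] m := by
  induction hphi with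
  | nil =>
    intro _
    rw [countFactor_nil _ (by simp), countFactor_nil _ (by simp), countUFD_nil]
    simp
  | flat α a hα hphia ih =>
    intro _
    have h1 : countFactor [D, U, D] (α ++ [U, D]) =
        countFactor [D, U, D] α + (if α = [] then 0 else 1) := by
      rw [dud_append_endD α [U, D] (DH_getLast hα)]
      have h0 : countFactor [D, U, D] [U, D] = 0 := by decide
      rw [h0]
      by_cases hα0 : α = [] <;> simp [hα0, List.isPrefixOf]
    have h2 : countUFD (a ++ [F]) = countUFD a := by
      rw [countUFD_append_congr a [F] (fun r _ => fThenD_append_F r)]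
      have : countUFD [F] = 0 := by decide
      omega
    have h3 : countFactor [F] (a ++ [F]) = countFactor [F] a + 1 := by
      simp [countFactor_F_eq_count, List.count_append]
    have hlen := phi_length hphia
    rw [h1, h2, h3]
    have ih' := ih hα
    by_cases ha0 : a = []
    · subst ha0
      simp at hlen
      subst hlen
      simp at ih' ⊢
    · have hα0 : α ≠ [] := by
        intro h; subst h
        simp at hlen
        exact ha0 hlen
      have hcond1 : (a ++ [F] ≠ [] ∧ ∀ x ∈ a ++ [F], x = F) ↔ (∀ x ∈ a, x = F) := by
        simp
        constructor
        · intro h x hx; exact h x (Or.inl hx)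
        · rintro h x (hx | rfl)
          · exact h x hx
          · rfl
      rw [if_neg hα0]
      by_cases hf : ∀ x ∈ a, x = F
      · rw [if_pos (hcond1.mpr hf)]
        rw [if_pos ⟨ha0, hf⟩] at ih'
        omega
      · rw [if_neg (fun h => hf (hcond1.mp h))]
        rw [if_neg (fun h : (a ≠ [] ∧ ∀ x ∈ a, x = F) => hf h.2)] at ih'
        omega
  | up α β γ a b c hα hβ hγ hpa hpb hpc iha ihb ihc =>
    intro hDH
    have ma := phi_motzkin hpa
    have mb := phi_motzkin hpb
    have mc := phi_motzkin hpc
    -- dud computation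
    have hdud : countFactor [D, U, D] (α ++ [U, U] ++ β ++ [D] ++ γ ++ [D]) =
        countFactor [D, U, D] α + countFactor [D, U, D] β + countFactor [D, U, D] γ +
          (if [U, D].isPrefixOf γ then 1 else 0) := by
      have hshape : α ++ [U, U] ++ β ++ [D] ++ γ ++ [D] =
          α ++ (U :: U :: (β ++ (D :: (γ ++ [D])))) := by simp
      rw [hshape, dud_append_endD α _ (DH_getLast hα), dud_cons_U, dud_cons_U,
        dud_append_endD β (D :: (γ ++ [D])) (DH_getLast hβ), dud_cons_D,
        dud_append_endD γ [D] (DH_getLast hγ), UDpre_append_D hγ]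
      have e1 : countFactor [D, U, D] [D] = 0 := by decide
      have e2 : [U, D].isPrefixOf (U :: U :: (β ++ (D :: (γ ++ [D])))) = false := by
        simp [List.isPrefixOf]
      have e3 : [U, D].isPrefixOf (D :: (γ ++ [D])) = false := by
        simp [List.isPrefixOf]
      have e4 : [U, D].isPrefixOf ([D] : List Step) = false := by decide
      rw [e1, e2, e4, e3]
      simp
      ring
    -- countUFD computation
    have hw0h : ∀ r, (U :: r) <:+ b → fThenD (r ++ [D]) = fThenD r := by
      intro r hr
      by_cases hfr : ∀ x ∈ r, x = F
      · have hrep : r = List.replicate r.length F :=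
          List.eq_replicate_iff.mpr ⟨rfl, hfr⟩
        rcases hn : r.length with _ | k
        · rw [hn] at hrep; subst hrep; simp
        · rw [hn] at hrep
          exfalso
          exact motzkin_no_suffix_UF mb k (hrep ▸ hr)
      · push_neg at hfr
        exact fThenD_append_of_mem _ _ hfr
    have w0 : countUFD (b ++ [D]) = countUFD b := by
      have h0 : countUFD [D] = 0 := by decide
      rw [countUFD_append_congr b [D] hw0h, h0]
      omega
    have hFTD : fThenD (b ++ [D]) = true ↔ (b ≠ [] ∧ ∀ x ∈ b, x = F) := by
      by_cases hall : ∀ x ∈ b, x = F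
      · have hrep : b = List.replicate b.length F := List.eq_replicate_iff.mpr ⟨rfl, hall⟩
        rcases hn : b.length with _ | k
        · rw [hn] at hrep; subst hrep; simp
        · rw [hn] at hrep
          rw [hrep, fThenD_replicate_D]
          simp [hall]
      · push_neg at hall
        rw [fThenD_append_of_mem _ _ hall, motzkin_fThenD mb]
        constructor
        · intro h; exact absurd h (by simp)
        · rintro ⟨hb0, h⟩
          rcases hall with ⟨x, hx, hxF⟩
          exact absurd (h x hx) hxF
    have w1 : countUFD (U :: (b ++ [D])) =
        countUFD b + (if b ≠ [] ∧ ∀ x ∈ b, x = F then 1 else 0) := by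
      rw [countUFD_cons, w0, qUFD_U]
      by_cases h : b ≠ [] ∧ ∀ x ∈ b, x = F
      · rw [if_pos (hFTD.mpr h), if_pos h]
      · rw [if_neg h, if_neg (fun ht => h (hFTD.mp ht))]
    have w2 : countUFD (c ++ U :: (b ++ [D])) = countUFD c + countUFD (U :: (b ++ [D])) := by
      apply countUFD_append_congr
      intro r _
      by_cases hfr : ∀ x ∈ r, x = F
      · have hrep : r = List.replicate r.length F := List.eq_replicate_iff.mpr ⟨rfl, hfr⟩
        rw [hrep, fThenD_replicate_U, fThenD_replicate]
      · push_neg at hfr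
        exact fThenD_append_of_mem _ _ hfr
    have w3 : countUFD (a ++ (c ++ U :: (b ++ [D]))) =
        countUFD a + countUFD (c ++ U :: (b ++ [D])) := by
      apply countUFD_append_congr
      intro r _
      by_cases hfr : ∀ x ∈ r, x = F
      · have hrep : r = List.replicate r.length F := List.eq_replicate_iff.mpr ⟨rfl, hfr⟩
        rw [hrep, fThenD_replicate]
        rcases motzkin_head_cases mc with hc | ⟨i, c', rfl⟩
        · have hcrep : c = List.replicate c.length F := List.eq_replicate_iff.mpr ⟨rfl, hc⟩
          rw [hcrep]
          try simp only [List.cons_append, List.append_assoc]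
          rw [← List.append_assoc, ← List.replicate_add]
          exact fThenD_replicate_U _ _
        · simp only [List.cons_append, List.append_assoc]
          rw [← List.append_assoc, ← List.replicate_add]
          exact fThenD_replicate_U _ _
      · push_neg at hfr
        exact fThenD_append_of_mem _ _ hfr
    have hufd : countUFD (a ++ c ++ U :: (b ++ [D])) =
        countUFD a + countUFD c + countUFD b +
          (if b ≠ [] ∧ ∀ x ∈ b, x = F then 1 else 0) := by
      rw [show a ++ c ++ U :: (b ++ [D]) = a ++ (c ++ U :: (b ++ [D])) by simp]
      rw [w3, w2, w1]
      omega
    -- F count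
    have hF : countFactor [F] (a ++ c ++ U :: (b ++ [D])) =
        countFactor [F] a + countFactor [F] c + countFactor [F] b := by
      simp [countFactor_F_eq_count, List.count_append, List.count_cons]
      omega
    -- e m' = 0
    have hem : ¬ ((a ++ c ++ U :: (b ++ [D])) ≠ [] ∧ ∀ x ∈ a ++ c ++ U :: (b ++ [D]), x = F) := by
      rintro ⟨-, h⟩
      have := h U (by simp)
      exact absurd this (by simp)
    -- key: [U,D].isPrefixOf γ ↔ e c
    have hkey : ([U, D].isPrefixOf γ = true) ↔ (c ≠ [] ∧ ∀ x ∈ c, x = F) := by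
      constructor
      · intro h
        obtain ⟨k, rfl⟩ := DH_startUD hγ h
        have hlc := phi_length hpc
        refine ⟨?_, phi_altUD hpc (k + 1) rfl⟩
        intro hc0
        rw [hc0] at hlc
        simp at hlc
      · rintro ⟨hc0, hcf⟩
        have := phi_allF hpc hcf
        obtain ⟨k, hk⟩ : ∃ k, c.length = k + 1 := by
          cases hn : c.length with
          | zero => exact absurd (List.length_eq_zero_iff.mp hn) hc0
          | succ k => exact ⟨k, rfl⟩
        rw [hk] at this
        rw [this]
        simp [List.isPrefixOf]
    -- e a = 0
    have hea : ¬ (a ≠ [] ∧ ∀ x ∈ a, x = F) := by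
      rintro ⟨ha0, haf⟩
      have hα' : α = altUD a.length := phi_allF hpa haf
      obtain ⟨k, hk⟩ : ∃ k, a.length = k + 1 := by
        cases hn : a.length with
        | zero => exact absurd (List.length_eq_zero_iff.mp hn) ha0
        | succ k => exact ⟨k, rfl⟩
      rw [hk] at hα'
      subst hα'
      have hDH' : DH (U :: (D :: (altUD k ++ [U, U] ++ β ++ [D] ++ γ ++ [D]))) := by
        have : altUD (k+1) ++ [U, U] ++ β ++ [D] ++ γ ++ [D] =
            U :: (D :: (altUD k ++ [U, U] ++ β ++ [D] ++ γ ++ [D])) := by simp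
        rwa [this] at hDH
      rcases DH_inversion hDH' with h0 | ⟨α₁, β₁, h1, h2, h3, heq⟩
      · simp at h0
      have heq2 : α₁ ++ [D] ++ β₁ = D :: (altUD k ++ [U, U] ++ β ++ [D] ++ γ ++ [D]) := by
        injection heq.symm
      rcases DH_head h1 with rfl | ⟨t, rfl⟩
      · simp at heq2
        have hht : height β₁ ≤ 1 := by
          refine le_trans h3 ?_
          simp [height_UD.symm]
        have hpre : altUD k ++ [U, U] <+: β₁ := by
          rw [heq2]
          exact ⟨β ++ D :: (γ ++ [D]), by simp⟩
        have hv := height_le_iff.mp hht _ hpre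
        simp [List.count_append, List.count_cons] at hv
      · simp at heq2
    -- assemble
    have ihA := iha hα
    have ihB := ihb hβ
    have ihC := ihc hγ
    rw [if_neg hea] at ihA
    have hkey' : (if [U, D].isPrefixOf γ then (1:ℕ) else 0) =
        (if c ≠ [] ∧ ∀ x ∈ c, x = F then 1 else 0) := by
      by_cases h : [U, D].isPrefixOf γ
      · rw [if_pos h, if_pos (hkey.mp h)]
      · rw [if_neg h, if_neg (fun hc => h (hkey.mpr hc))]
    rw [hdud, hufd, hF, if_neg hem, hkey']
    omega

/-- φ transports DUD: #DUD(P) = #F(φP) - #UF⁺D(φP) - [φP = Fⁿ], for n ≥ 1. -/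
theorem stmt15 (n : ℕ) (hn : 1 ≤ n) (P m : List Step) (hP : DH P) (hlen : P.length = 2 * n)
    (hphi : Phi P m) :
    countFactor [Step.D, Step.U, Step.D] P + countUFD m +
      (if m = List.replicate n Step.F then 1 else 0) = countFactor [Step.F] m := by
  have hm := main_identity hphi hP
  have hlen2 := phi_length hphi
  have hlm : m.length = n := by omega
  have hiff : (m = List.replicate n Step.F) ↔ (m ≠ [] ∧ ∀ x ∈ m, x = F) := by
    constructor
    · rintro rfl
      refine ⟨?_, fun x hx => List.eq_of_mem_replicate hx⟩
      intro hh
      apply_fun List.length at hh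
      simp at hh
      omega
    · rintro ⟨h0, hf⟩
      exact List.eq_replicate_iff.mpr ⟨hlm, hf⟩
  by_cases h : m = List.replicate n Step.F
  · rw [if_pos h, ← hm, if_pos (hiff.mp h)]
  · rw [if_neg h, ← hm, if_neg (fun hc => h (hiff.mpr hc))]
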